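/- For all x ≥ 0, g(x) ≥ g₂(x), where g(x) = (1+x)·log(1+x) − x and g₂(x) = x + 1 − √(1+2x). -/

import Mathlib

open Real Set

lemma aux_log_lb (x : ℝ) (hx : 0 ≤ x) : 2 * x / (2 + x) ≤ Real.log (1 + x) := by
  set f : ℝ → ℝ := fun u => Real.log (1 + u) - 2 * u / (2 + u) with hf
  have hder : ∀ u ∈ interior (Ici (0:ℝ)), HasDerivAt f
      (1 / (1 + u) - 4 / (2 + u) ^ 2) u := by
    intro u hu
    rw [interior_Ici] at hu
    have hu0 : (0:ℝ) < u := hu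
    have h1 : (1 + u) ≠ 0 := by positivity
    have h2 : (2 + u) ≠ 0 := by positivity
    have d1 : HasDerivAt (fun u : ℝ => Real.log (1 + u)) (1 / (1 + u)) u := by
      have := ((hasDerivAt_id u).const_add 1).log h1
      simpa [one_div] using this
    have d2 : HasDerivAt (fun u : ℝ => 2 * u / (2 + u)) (4 / (2 + u) ^ 2) u := by
      have := (((hasDerivAt_id u).const_mul 2).div ((hasDerivAt_id u).const_add 2) h2)
      refine this.congr_deriv ?_
      simp only [id]
      ring
    exact d1.sub d2
  have hmono : MonotoneOn f (Ici (0:ℝ)) := by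
    apply monotoneOn_of_deriv_nonneg (convex_Ici 0)
    · intro u hu
      have h1 : (1 + u) ≠ 0 := by have : (0:ℝ) ≤ u := hu; positivity
      have h2 : (2 + u) ≠ 0 := by have : (0:ℝ) ≤ u := hu; positivity
      exact (((continuousAt_const.add continuousAt_id).log h1).sub
        ((continuousAt_const.mul continuousAt_id).div
          (continuousAt_const.add continuousAt_id) h2)).continuousWithinAt
    · exact fun u hu => (hder u hu).differentiableAt.differentiableWithinAt
    · intro u hu
      rw [(hder u hu).deriv]
      rw [interior_Ici] at hu
      have hu0 : (0:ℝ) < u := hu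
      rw [sub_nonneg, div_le_div_iff₀ (by positivity) (by positivity)]
      nlinarith
  have h0 : f 0 ≤ f x := hmono (le_refl (0:ℝ)) hx hx
  simp only [hf] at h0
  norm_num at h0
  linarith

theorem bennett_ge_g2 (x : ℝ) (hx : 0 ≤ x) :
    (1 + x) * Real.log (1 + x) - x ≥ x + 1 - Real.sqrt (1 + 2 * x) := by
  have hlog := aux_log_lb x hx
  have h1 : (0:ℝ) < 2 + x := by linarith
  have step1 : (1 + x) * Real.log (1 + x) - x ≥ x ^ 2 / (2 + x) := by
    have : (1 + x) * (2 * x / (2 + x)) ≤ (1 + x) * Real.log (1 + x) :=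
      mul_le_mul_of_nonneg_left hlog (by linarith)
    have heq : (1 + x) * (2 * x / (2 + x)) - x = x ^ 2 / (2 + x) := by
      field_simp
      ring
    linarith
  have step2 : (3 * x + 2) / (x + 2) ≤ Real.sqrt (1 + 2 * x) := by
    rw [Real.le_sqrt (by positivity) (by linarith)]
    rw [div_pow, div_le_iff₀ (by positivity)]
    nlinarith
  have heq2 : x + 1 - (3 * x + 2) / (x + 2) = x ^ 2 / (2 + x) := by
    field_simp
    ring
  linarith
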